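/- arXiv:2211.13840 — 2 statements merged into one kernel-verified Lean document; each statement's English description precedes it below -/
import Mathlib

section
/- Let T be linear, 1 ≤ r ≤ s₀, s₁ ≤ ∞, and suppose the grand maximal truncation operators satisfy M_{T,s₀} : L^r → L^{p₀,∞} with norm C₀ and M_{T,s₁} : L^r → L^{p₁,∞} with norm C₁. Then for θ ∈ (0,1), with 1/s = (1−θ)/s₀ + θ/s₁ and 1/p = (1−θ)/p₀ + θ/p₁, one has the pointwise bound M_{T,s} f(x) ≤ (M_{T,s₀} f(x))^{1−θ} (M_{T,s₁} f(x))^θ, and consequently ‖M_{T,s}‖_{L^r → L^{p,∞}} ≲ C₀^{1−θ} C₁^θ. -/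
open MeasureTheory Set
open scoped ENNReal NNReal

noncomputable section

/-- An axis-parallel cube: center `c` and half side length `r > 0`. -/
structure Cube (n : ℕ) where
  c : Fin n → ℝ
  r : ℝ
  hr : 0 < r

namespace Cube
variable {n : ℕ}
def set (Q : Cube n) : Set (Fin n → ℝ) := {x | ∀ i, |x i - Q.c i| ≤ Q.r}
/-- The concentric dilate `3Q`. -/
def three (Q : Cube n) : Cube n := ⟨Q.c, 3 * Q.r, by have := Q.hr; linarith⟩
end Cube

/-- The grand maximal truncation operator
`M_{T,s} f(x) = sup_{Q ∋ x} |Q|^{-1/s} ‖T(f 1_{(3Q)ᶜ})‖_{L^s(Q)}`. -/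
def MT {n : ℕ} (T : ((Fin n → ℝ) → ℝ) →ₗ[ℝ] ((Fin n → ℝ) → ℝ)) (s : ℝ)
    (f : (Fin n → ℝ) → ℝ) (x : Fin n → ℝ) : ℝ≥0∞ :=
  ⨆ (Q : Cube n) (_ : x ∈ Q.set),
    volume Q.set ^ (-(1 / s)) *
      (∫⁻ y in Q.set, (‖T ((Q.three.set)ᶜ.indicator f) y‖₊ : ℝ≥0∞) ^ s) ^ (1 / s)

/-! ### Auxiliary lemmas -/

lemma cube_vol {n : ℕ} (Q : Cube n) :
    volume Q.set = ENNReal.ofReal (2 * Q.r) ^ n := by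
  have h : Q.set = Set.pi Set.univ (fun i => Icc (Q.c i - Q.r) (Q.c i + Q.r)) := by
    ext x
    simp only [Cube.set, Set.mem_setOf_eq, Set.mem_pi, Set.mem_univ, forall_true_left,
      Set.mem_Icc, abs_le]
    constructor
    · intro h i; obtain ⟨h1, h2⟩ := h i; constructor <;> linarith
    · intro h i; obtain ⟨h1, h2⟩ := h i; constructor <;> linarith
  have h2 : ∀ i : Fin n, Q.c i + Q.r - (Q.c i - Q.r) = 2 * Q.r := fun i => by ring
  rw [h, volume_pi_pi]
  simp [Real.volume_Icc, h2]

lemma cube_vol_ne_zero {n : ℕ} (Q : Cube n) : volume Q.set ≠ 0 := by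
  rw [cube_vol]
  have : (0:ℝ) < 2 * Q.r := by linarith [Q.hr]
  simp [pow_eq_zero_iff', ENNReal.ofReal_eq_zero, not_le, this]
  intro h; linarith [Q.hr]

lemma cube_vol_ne_top {n : ℕ} (Q : Cube n) : volume Q.set ≠ ⊤ := by
  rw [cube_vol]
  exact ENNReal.pow_ne_top ENNReal.ofReal_ne_top

/-- Lyapunov's interpolation inequality for `L^s` norms, proved via Hölder. -/
lemma lyapunov {α : Type*} [MeasurableSpace α] (μ : Measure α) (g : α → ℝ≥0∞)
    (hg : Measurable g) {s₀ s₁ θ s : ℝ} (h0 : 0 < s₀) (h1 : 0 < s₁)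
    (hθ : θ ∈ Set.Ioo (0:ℝ) 1) (hs : 1/s = (1-θ)/s₀ + θ/s₁) :
    (∫⁻ a, g a ^ s ∂μ) ^ (1/s) ≤
      (∫⁻ a, g a ^ s₀ ∂μ) ^ ((1-θ)/s₀) * (∫⁻ a, g a ^ s₁ ∂μ) ^ (θ/s₁) := by
  obtain ⟨hθ0, hθ1⟩ := hθ
  have hθ1' : (0:ℝ) < 1 - θ := by linarith
  have hspos : 0 < s := by
    have h : 0 < 1/s := by rw [hs]; positivity
    exact one_div_pos.mp h
  have hsne : s ≠ 0 := ne_of_gt hspos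
  have key : (1-θ)*s/s₀ + θ*s/s₁ = 1 := by
    have : (1-θ)*s/s₀ + θ*s/s₁ = s * (1/s) := by rw [hs]; ring
    rw [this, mul_one_div_cancel hsne]
  have hlt : (1-θ)*s < s₀ := by
    have h2 : 0 < θ*s/s₁ := by positivity
    have h3 : (1-θ)*s/s₀ < 1 := by linarith
    exact (div_lt_one h0).mp h3
  set P := s₀/((1-θ)*s) with hP
  set R := s₁/(θ*s) with hR
  have hPQ : Real.HolderConjugate P R := by
    refine ⟨?_, div_pos h0 (mul_pos hθ1' hspos), div_pos h1 (mul_pos hθ0 hspos)⟩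
    rw [hP, hR, inv_div, inv_div, inv_one]; exact key
  have hF : Measurable fun a => g a ^ ((1-θ)*s) := hg.pow_const _
  have hG : Measurable fun a => g a ^ (θ*s) := hg.pow_const _
  have e1 : ∀ a, g a ^ ((1-θ)*s) * g a ^ (θ*s) = g a ^ s := fun a => by
    rw [← ENNReal.rpow_add_of_nonneg _ _ (by positivity) (by positivity)]
    congr 1; ring
  have e2 : ∀ a, (g a ^ ((1-θ)*s)) ^ P = g a ^ s₀ := fun a => by
    rw [← ENNReal.rpow_mul]; congr 1; rw [hP]; field_simp
  have e3 : ∀ a, (g a ^ (θ*s)) ^ R = g a ^ s₁ := fun a => by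
    rw [← ENNReal.rpow_mul]; congr 1; rw [hR]; field_simp
  have holder : (∫⁻ a, g a ^ s ∂μ) ≤
      (∫⁻ a, g a ^ s₀ ∂μ) ^ (1/P) * (∫⁻ a, g a ^ s₁ ∂μ) ^ (1/R) := by
    calc ∫⁻ a, g a ^ s ∂μ
        = ∫⁻ a, ((fun a => g a ^ ((1-θ)*s)) * (fun a => g a ^ (θ*s))) a ∂μ :=
          lintegral_congr fun a => (e1 a).symm
      _ ≤ (∫⁻ a, (g a ^ ((1-θ)*s)) ^ P ∂μ) ^ (1/P) * (∫⁻ a, (g a ^ (θ*s)) ^ R ∂μ) ^ (1/R) :=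
          ENNReal.lintegral_mul_le_Lp_mul_Lq μ hPQ hF.aemeasurable hG.aemeasurable
      _ = (∫⁻ a, g a ^ s₀ ∂μ) ^ (1/P) * (∫⁻ a, g a ^ s₁ ∂μ) ^ (1/R) := by
          rw [lintegral_congr e2, lintegral_congr e3]
  calc (∫⁻ a, g a ^ s ∂μ) ^ (1/s)
      ≤ ((∫⁻ a, g a ^ s₀ ∂μ) ^ (1/P) * (∫⁻ a, g a ^ s₁ ∂μ) ^ (1/R)) ^ (1/s) :=
        ENNReal.rpow_le_rpow holder (by positivity)
    _ = (∫⁻ a, g a ^ s₀ ∂μ) ^ ((1-θ)/s₀) * (∫⁻ a, g a ^ s₁ ∂μ) ^ (θ/s₁) := by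
        rw [ENNReal.mul_rpow_of_nonneg _ _ (by positivity), ← ENNReal.rpow_mul,
          ← ENNReal.rpow_mul]
        congr 2
        · rw [hP, one_div_div]; field_simp
        · rw [hR, one_div_div]; field_simp

/-- The pointwise interpolation bound for grand maximal truncation operators. -/
lemma MT_pointwise {n : ℕ} (T : ((Fin n → ℝ) → ℝ) →ₗ[ℝ] ((Fin n → ℝ) → ℝ))
    (hTmeas : ∀ g, Measurable (T g)) {s₀ s₁ θ s : ℝ} (h0 : 0 < s₀) (h1 : 0 < s₁)
    (hθ : θ ∈ Set.Ioo (0:ℝ) 1) (hs : 1/s = (1-θ)/s₀ + θ/s₁)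
    (f : (Fin n → ℝ) → ℝ) (x : Fin n → ℝ) :
    MT T s f x ≤ (MT T s₀ f x) ^ (1 - θ) * (MT T s₁ f x) ^ θ := by
  obtain ⟨hθ0, hθ1⟩ := hθ
  have hθ1' : (0:ℝ) < 1 - θ := by linarith
  rw [MT]
  refine iSup₂_le fun Q hQ => ?_
  set g : (Fin n → ℝ) → ℝ≥0∞ := fun y => (‖T ((Q.three.set)ᶜ.indicator f) y‖₊ : ℝ≥0∞) with hgdef
  have hg : Measurable g := (hTmeas _).nnnorm.coe_nnreal_ennreal
  set v := volume Q.set with hv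
  have hv0 : v ≠ 0 := cube_vol_ne_zero Q
  have hvt : v ≠ ⊤ := cube_vol_ne_top Q
  set I₀ := ∫⁻ y in Q.set, g y ^ s₀ with hI₀
  set I₁ := ∫⁻ y in Q.set, g y ^ s₁ with hI₁
  have lya := lyapunov (volume.restrict Q.set) g hg h0 h1 ⟨hθ0, hθ1⟩ hs
  have step1 : v ^ (-(1/s)) * (∫⁻ y in Q.set, g y ^ s) ^ (1/s)
      ≤ v ^ (-(1/s)) * (I₀ ^ ((1-θ)/s₀) * I₁ ^ (θ/s₁)) := mul_le_mul_right lya _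
  have step2 : v ^ (-(1/s)) * (I₀ ^ ((1-θ)/s₀) * I₁ ^ (θ/s₁))
      = (v ^ (-(1/s₀)) * I₀ ^ (1/s₀)) ^ (1-θ) * (v ^ (-(1/s₁)) * I₁ ^ (1/s₁)) ^ θ := by
    rw [ENNReal.mul_rpow_of_nonneg _ _ hθ1'.le, ENNReal.mul_rpow_of_nonneg _ _ hθ0.le,
      ← ENNReal.rpow_mul, ← ENNReal.rpow_mul, ← ENNReal.rpow_mul, ← ENNReal.rpow_mul]
    rw [show (1/s₀) * (1-θ) = (1-θ)/s₀ from by ring, show (1/s₁) * θ = θ/s₁ from by ring]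
    rw [show v ^ (-(1/s₀) * (1-θ)) * I₀ ^ ((1-θ)/s₀) * (v ^ (-(1/s₁) * θ) * I₁ ^ (θ/s₁))
        = (v ^ (-(1/s₀) * (1-θ)) * v ^ (-(1/s₁) * θ)) * (I₀ ^ ((1-θ)/s₀) * I₁ ^ (θ/s₁))
      from by ring]
    rw [← ENNReal.rpow_add _ _ hv0 hvt]
    congr 2
    rw [hs]; ring
  have hterm₀ : v ^ (-(1/s₀)) * I₀ ^ (1/s₀) ≤ MT T s₀ f x := by
    rw [MT]
    exact le_iSup₂ (f := fun (Q' : Cube n) (_ : x ∈ Q'.set) =>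
      volume Q'.set ^ (-(1 / s₀)) *
        (∫⁻ y in Q'.set, (‖T ((Q'.three.set)ᶜ.indicator f) y‖₊ : ℝ≥0∞) ^ s₀) ^ (1 / s₀)) Q hQ
  have hterm₁ : v ^ (-(1/s₁)) * I₁ ^ (1/s₁) ≤ MT T s₁ f x := by
    rw [MT]
    exact le_iSup₂ (f := fun (Q' : Cube n) (_ : x ∈ Q'.set) =>
      volume Q'.set ^ (-(1 / s₁)) *
        (∫⁻ y in Q'.set, (‖T ((Q'.three.set)ᶜ.indicator f) y‖₊ : ℝ≥0∞) ^ s₁) ^ (1 / s₁)) Q hQ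
  calc v ^ (-(1/s)) * (∫⁻ y in Q.set, g y ^ s) ^ (1/s)
      ≤ (v ^ (-(1/s₀)) * I₀ ^ (1/s₀)) ^ (1-θ) * (v ^ (-(1/s₁)) * I₁ ^ (1/s₁)) ^ θ := by
        rw [← step2]; exact step1
    _ ≤ (MT T s₀ f x) ^ (1-θ) * (MT T s₁ f x) ^ θ :=
        mul_le_mul' (ENNReal.rpow_le_rpow hterm₀ hθ1'.le) (ENNReal.rpow_le_rpow hterm₁ hθ0.le)

/-- If the superlevel sets of `G` are all null and `M` vanishes wherever `G` does,
then the superlevel sets of `M` are null. -/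
lemma null_aux {α : Type*} [MeasurableSpace α] (μ : Measure α) (G M : α → ℝ≥0∞)
    (hG : ∀ c : ℝ≥0, 0 < c → μ {x | (c:ℝ≥0∞) < G x} = 0)
    (hdom : ∀ x, G x = 0 → M x = 0) (lam : ℝ≥0∞) :
    μ {x | lam < M x} = 0 := by
  have hsub : {x | lam < M x} ⊆ ⋃ k : ℕ, {x | ((k:ℝ≥0∞))⁻¹ < G x} := by
    intro x hx
    simp only [mem_setOf_eq] at hx
    have hGx : G x ≠ 0 := by
      intro h0
      rw [hdom x h0] at hx
      exact absurd hx (by simp)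
    obtain ⟨k, hk⟩ := ENNReal.exists_inv_nat_lt hGx
    exact mem_iUnion.mpr ⟨k, hk⟩
  refine measure_mono_null hsub (measure_iUnion_null fun k => ?_)
  rcases Nat.eq_zero_or_pos k with rfl | hk
  · have : {x | ((0:ℕ):ℝ≥0∞)⁻¹ < G x} = ∅ := by
      ext x; simp [ENNReal.inv_zero, not_top_lt]
    rw [this, measure_empty]
  · have hc : (0:ℝ≥0) < (k:ℝ≥0)⁻¹ := by
      have : (0:ℝ≥0) < (k:ℝ≥0) := by exact_mod_cast hk
      positivity
    have hcoe : (((k:ℝ≥0)⁻¹ : ℝ≥0) : ℝ≥0∞) = ((k:ℝ≥0∞))⁻¹ := by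
      rw [ENNReal.coe_inv (by exact_mod_cast hk.ne')]
      norm_num
    rw [← hcoe]
    exact hG _ hc

/-- The key `ℝ≥0` computation balancing the two levels. -/
lemma nnreal_calc (C₀ C₁ Nn lam Cθ m : ℝ≥0) (θ p p₀ p₁ : ℝ)
    (hNn : Nn ≠ 0) (hCN : Cθ * Nn ≠ 0) (hm : m ≠ 0)
    (hp : 1/p = (1-θ)/p₀ + θ/p₁) (hpne : p ≠ 0)
    (hCθdef : Cθ = C₀^(1-θ)*C₁^θ) (hmdef : m = ((Cθ * Nn)/lam)^p) :
    (C₀ * Nn * m^(-(1/p₀)))^(1-θ) * (C₁ * Nn * m^(-(1/p₁)))^θ = lam := by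
  rw [NNReal.mul_rpow, NNReal.mul_rpow, NNReal.mul_rpow, NNReal.mul_rpow,
    ← NNReal.rpow_mul, ← NNReal.rpow_mul]
  have rearr : C₀ ^ (1-θ) * Nn ^ (1-θ) * m ^ (-(1/p₀) * (1-θ))
      * (C₁ ^ θ * Nn ^ θ * m ^ (-(1/p₁) * θ))
      = Cθ * (Nn ^ (1-θ) * Nn ^ θ) * (m ^ (-(1/p₀) * (1-θ)) * m ^ (-(1/p₁) * θ)) := by
    rw [hCθdef]; ring
  rw [rearr, ← NNReal.rpow_add hNn, ← NNReal.rpow_add hm]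
  rw [show (1-θ) + θ = (1:ℝ) from by ring, NNReal.rpow_one]
  rw [show -(1/p₀) * (1-θ) + -(1/p₁) * θ = -(1/p) from by rw [hp]; ring]
  rw [hmdef, ← NNReal.rpow_mul, show p * -(1/p) = (-1 : ℝ) from by field_simp,
    NNReal.rpow_neg_one, inv_div]
  rw [mul_comm]; exact div_mul_cancel₀ lam hCN

/-- Interpolation of grand maximal truncation operators. -/
theorem stmt7 {n : ℕ} (T : ((Fin n → ℝ) → ℝ) →ₗ[ℝ] ((Fin n → ℝ) → ℝ))
    (hTmeas : ∀ g, Measurable (T g))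
    (r s₀ s₁ p₀ p₁ θ s p : ℝ) (C₀ C₁ : ℝ≥0)
    (hr : 1 ≤ r) (hs₀ : r ≤ s₀) (hs₁ : r ≤ s₁) (hp₀ : 0 < p₀) (hp₁ : 0 < p₁)
    (hθ : θ ∈ Set.Ioo (0 : ℝ) 1)
    (hs : 1 / s = (1 - θ) / s₀ + θ / s₁) (hp : 1 / p = (1 - θ) / p₀ + θ / p₁)
    (hM₀ : ∀ (f : (Fin n → ℝ) → ℝ), MemLp f (ENNReal.ofReal r) volume →
      ∀ lam : ℝ≥0, 0 < lam →
        (lam : ℝ≥0∞) * volume {x | (lam : ℝ≥0∞) < MT T s₀ f x} ^ (1 / p₀)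
          ≤ (C₀ : ℝ≥0∞) * eLpNorm f (ENNReal.ofReal r) volume)
    (hM₁ : ∀ (f : (Fin n → ℝ) → ℝ), MemLp f (ENNReal.ofReal r) volume →
      ∀ lam : ℝ≥0, 0 < lam →
        (lam : ℝ≥0∞) * volume {x | (lam : ℝ≥0∞) < MT T s₁ f x} ^ (1 / p₁)
          ≤ (C₁ : ℝ≥0∞) * eLpNorm f (ENNReal.ofReal r) volume) :
    (∀ (f : (Fin n → ℝ) → ℝ) (x : Fin n → ℝ),
      MT T s f x ≤ (MT T s₀ f x) ^ (1 - θ) * (MT T s₁ f x) ^ θ) ∧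
    ∃ K : ℝ≥0, 0 < K ∧
      ∀ (f : (Fin n → ℝ) → ℝ), MemLp f (ENNReal.ofReal r) volume →
        ∀ lam : ℝ≥0, 0 < lam →
          (lam : ℝ≥0∞) * volume {x | (lam : ℝ≥0∞) < MT T s f x} ^ (1 / p)
            ≤ (K : ℝ≥0∞) * (C₀ : ℝ≥0∞) ^ (1 - θ) * (C₁ : ℝ≥0∞) ^ θ
                * eLpNorm f (ENNReal.ofReal r) volume := by
  obtain ⟨hθ0, hθ1⟩ := hθ
  have hθ1' : (0:ℝ) < 1 - θ := by linarith
  have hs₀pos : 0 < s₀ := lt_of_lt_of_le zero_lt_one (hr.trans hs₀)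
  have hs₁pos : 0 < s₁ := lt_of_lt_of_le zero_lt_one (hr.trans hs₁)
  have hppos : 0 < p := one_div_pos.mp (by rw [hp]; positivity)
  have hpt : ∀ (f : (Fin n → ℝ) → ℝ) (x : Fin n → ℝ),
      MT T s f x ≤ (MT T s₀ f x) ^ (1 - θ) * (MT T s₁ f x) ^ θ :=
    fun f x => MT_pointwise T hTmeas hs₀pos hs₁pos ⟨hθ0, hθ1⟩ hs f x
  refine ⟨hpt, (2:ℝ≥0)^(1/p), NNReal.rpow_pos two_pos, ?_⟩
  intro f hf lam hlam
  set N := eLpNorm f (ENNReal.ofReal r) volume with hN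
  have hext : ∀ (pp : ℝ), 0 < pp → ∀ (G : (Fin n → ℝ) → ℝ≥0∞),
      (∀ c : ℝ≥0, 0 < c → (c:ℝ≥0∞) * volume {x | (c:ℝ≥0∞) < G x} ^ (1/pp) ≤ 0) →
      ∀ c : ℝ≥0, 0 < c → volume {x | (c:ℝ≥0∞) < G x} = 0 := by
    intro pp hpp G hG c hc
    have h2 : (c:ℝ≥0∞) * volume {x | (c:ℝ≥0∞) < G x} ^ (1/pp) = 0 :=
      le_antisymm (hG c hc) zero_le
    rcases mul_eq_zero.mp h2 with h3 | h3
    · exact absurd h3 (by exact_mod_cast hc.ne')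
    · rcases ENNReal.rpow_eq_zero_iff.mp h3 with ⟨h4, _⟩ | ⟨_, h4⟩
      · exact h4
      · have := one_div_pos.mpr hpp; linarith
  by_cases hdeg : (C₀:ℝ≥0∞) * N = 0 ∨ (C₁:ℝ≥0∞) * N = 0
  · have hnull : volume {x | (lam:ℝ≥0∞) < MT T s f x} = 0 := by
      rcases hdeg with h | h
      · refine null_aux volume (MT T s₀ f) (MT T s f)
          (hext p₀ hp₀ _ (fun c hc => ?_)) (fun x h0 => ?_) _
        · rw [← h]; exact hM₀ f hf c hc
        · have hb := hpt f x
          rw [h0, ENNReal.zero_rpow_of_pos hθ1', zero_mul] at hb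
          exact le_antisymm hb zero_le
      · refine null_aux volume (MT T s₁ f) (MT T s f)
          (hext p₁ hp₁ _ (fun c hc => ?_)) (fun x h0 => ?_) _
        · rw [← h]; exact hM₁ f hf c hc
        · have hb := hpt f x
          rw [h0, ENNReal.zero_rpow_of_pos hθ0, mul_zero] at hb
          exact le_antisymm hb zero_le
    rw [hnull, ENNReal.zero_rpow_of_pos (one_div_pos.mpr hppos), mul_zero]
    exact zero_le
  · push_neg at hdeg
    obtain ⟨hd0, hd1⟩ := hdeg
    have hC₀ : C₀ ≠ 0 := fun h => hd0 (by simp [h])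
    have hC₁ : C₁ ≠ 0 := fun h => hd1 (by simp [h])
    have hNne : N ≠ 0 := fun h => hd0 (by simp [h])
    by_cases hNt : N = ⊤
    · have htop : (((2:ℝ≥0)^((1:ℝ)/p) : ℝ≥0) : ℝ≥0∞) * (C₀:ℝ≥0∞)^(1-θ) * (C₁:ℝ≥0∞)^θ * N = ⊤ := by
        rw [hNt, ENNReal.mul_top]
        apply mul_ne_zero
        apply mul_ne_zero
        · exact ENNReal.coe_ne_zero.mpr (NNReal.rpow_pos two_pos).ne'
        · exact (ENNReal.rpow_pos (ENNReal.coe_pos.mpr (pos_iff_ne_zero.mpr hC₀))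
            ENNReal.coe_ne_top).ne'
        · exact (ENNReal.rpow_pos (ENNReal.coe_pos.mpr (pos_iff_ne_zero.mpr hC₁))
            ENNReal.coe_ne_top).ne'
      rw [htop]
      exact le_top
    · set Nn := N.toNNReal with hNndef
      have hNcoe : (Nn:ℝ≥0∞) = N := ENNReal.coe_toNNReal hNt
      have hNn : Nn ≠ 0 := fun h => hNne (by rw [← hNcoe, h, ENNReal.coe_zero])
      set Cθ : ℝ≥0 := C₀^(1-θ)*C₁^θ with hCθdef
      have hCθ : Cθ ≠ 0 :=
        mul_ne_zero (fun h => hC₀ (NNReal.rpow_eq_zero_iff.mp h).1)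
          (fun h => hC₁ (NNReal.rpow_eq_zero_iff.mp h).1)
      have hCN : Cθ * Nn ≠ 0 := mul_ne_zero hCθ hNn
      set m : ℝ≥0 := ((Cθ * Nn)/lam)^p with hmdef
      have hdivne : (Cθ * Nn)/lam ≠ 0 := div_ne_zero hCN hlam.ne'
      have hm : m ≠ 0 := fun h => hdivne (NNReal.rpow_eq_zero_iff.mp h).1
      set a : ℝ≥0 := C₀ * Nn * m^(-(1/p₀)) with hadef
      set b : ℝ≥0 := C₁ * Nn * m^(-(1/p₁)) with hbdef
      have ham : m^(-(1/p₀)) ≠ 0 := fun h => hm (NNReal.rpow_eq_zero_iff.mp h).1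
      have hbm : m^(-(1/p₁)) ≠ 0 := fun h => hm (NNReal.rpow_eq_zero_iff.mp h).1
      have ha : a ≠ 0 := mul_ne_zero (mul_ne_zero hC₀ hNn) ham
      have hb : b ≠ 0 := mul_ne_zero (mul_ne_zero hC₁ hNn) hbm
      have hab : a^(1-θ) * b^θ = lam :=
        nnreal_calc C₀ C₁ Nn lam Cθ m θ p p₀ p₁ hNn hCN hm hp hppos.ne' hCθdef hmdef
      have habE : ((a:ℝ≥0∞))^(1-θ) * ((b:ℝ≥0∞))^θ = (lam:ℝ≥0∞) := by
        rw [← ENNReal.coe_rpow_of_ne_zero ha, ← ENNReal.coe_rpow_of_ne_zero hb,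
          ← ENNReal.coe_mul, hab]
      have hsub : {x | (lam:ℝ≥0∞) < MT T s f x}
          ⊆ {x | (a:ℝ≥0∞) < MT T s₀ f x} ∪ {x | (b:ℝ≥0∞) < MT T s₁ f x} := by
        intro x hx
        simp only [mem_setOf_eq] at hx
        by_contra hcon
        simp only [Set.mem_union, mem_setOf_eq, not_or, not_lt] at hcon
        obtain ⟨hA, hB⟩ := hcon
        have hle : MT T s f x ≤ (lam:ℝ≥0∞) := by
          calc MT T s f x ≤ (MT T s₀ f x)^(1-θ) * (MT T s₁ f x)^θ := hpt f x
            _ ≤ ((a:ℝ≥0∞))^(1-θ) * ((b:ℝ≥0∞))^θ :=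
              mul_le_mul' (ENNReal.rpow_le_rpow hA hθ1'.le) (ENNReal.rpow_le_rpow hB hθ0.le)
            _ = lam := habE
        exact absurd hx (not_lt.mpr hle)
      have hva : volume {x | (a:ℝ≥0∞) < MT T s₀ f x} ≤ (m:ℝ≥0∞) := by
        have h0 := hM₀ f hf a (pos_iff_ne_zero.mpr ha)
        have h1 : volume {x | (a:ℝ≥0∞) < MT T s₀ f x} ^ (1/p₀) ≤ ((C₀:ℝ≥0∞)*N) / a :=
          (ENNReal.le_div_iff_mul_le (Or.inl (ENNReal.coe_ne_zero.mpr ha))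
            (Or.inl ENNReal.coe_ne_top)).mpr (by rwa [mul_comm] at h0)
        have h2 : ((C₀:ℝ≥0∞)*N)/(a:ℝ≥0∞) = ((m^((1:ℝ)/p₀) : ℝ≥0) : ℝ≥0∞) := by
          rw [← hNcoe, ← ENNReal.coe_mul, ← ENNReal.coe_div ha]
          congr 1
          rw [hadef, div_mul_eq_div_div, div_self (mul_ne_zero hC₀ hNn), one_div,
            ← NNReal.rpow_neg, neg_neg]
        calc volume {x | (a:ℝ≥0∞) < MT T s₀ f x}
            = (volume {x | (a:ℝ≥0∞) < MT T s₀ f x} ^ (1/p₀)) ^ p₀ := by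
              rw [← ENNReal.rpow_mul, one_div, inv_mul_cancel₀ hp₀.ne', ENNReal.rpow_one]
          _ ≤ (((m^((1:ℝ)/p₀) : ℝ≥0)) : ℝ≥0∞) ^ p₀ :=
              ENNReal.rpow_le_rpow (h2 ▸ h1) hp₀.le
          _ = (m:ℝ≥0∞) := by
              rw [ENNReal.coe_rpow_of_ne_zero hm,
                ← ENNReal.rpow_mul, one_div, inv_mul_cancel₀ hp₀.ne', ENNReal.rpow_one]
      have hvb : volume {x | (b:ℝ≥0∞) < MT T s₁ f x} ≤ (m:ℝ≥0∞) := by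
        have h0 := hM₁ f hf b (pos_iff_ne_zero.mpr hb)
        have h1 : volume {x | (b:ℝ≥0∞) < MT T s₁ f x} ^ (1/p₁) ≤ ((C₁:ℝ≥0∞)*N) / b :=
          (ENNReal.le_div_iff_mul_le (Or.inl (ENNReal.coe_ne_zero.mpr hb))
            (Or.inl ENNReal.coe_ne_top)).mpr (by rwa [mul_comm] at h0)
        have h2 : ((C₁:ℝ≥0∞)*N)/(b:ℝ≥0∞) = ((m^((1:ℝ)/p₁) : ℝ≥0) : ℝ≥0∞) := by
          rw [← hNcoe, ← ENNReal.coe_mul, ← ENNReal.coe_div hb]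
          congr 1
          rw [hbdef, div_mul_eq_div_div, div_self (mul_ne_zero hC₁ hNn), one_div,
            ← NNReal.rpow_neg, neg_neg]
        calc volume {x | (b:ℝ≥0∞) < MT T s₁ f x}
            = (volume {x | (b:ℝ≥0∞) < MT T s₁ f x} ^ (1/p₁)) ^ p₁ := by
              rw [← ENNReal.rpow_mul, one_div, inv_mul_cancel₀ hp₁.ne', ENNReal.rpow_one]
          _ ≤ (((m^((1:ℝ)/p₁) : ℝ≥0)) : ℝ≥0∞) ^ p₁ :=
              ENNReal.rpow_le_rpow (h2 ▸ h1) hp₁.le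
          _ = (m:ℝ≥0∞) := by
              rw [ENNReal.coe_rpow_of_ne_zero hm,
                ← ENNReal.rpow_mul, one_div, inv_mul_cancel₀ hp₁.ne', ENNReal.rpow_one]
      have hvol : volume {x | (lam:ℝ≥0∞) < MT T s f x} ≤ ((2*m : ℝ≥0) : ℝ≥0∞) := by
        calc volume {x | (lam:ℝ≥0∞) < MT T s f x}
            ≤ volume ({x | (a:ℝ≥0∞) < MT T s₀ f x} ∪ {x | (b:ℝ≥0∞) < MT T s₁ f x}) :=
              measure_mono hsub
          _ ≤ volume {x | (a:ℝ≥0∞) < MT T s₀ f x} + volume {x | (b:ℝ≥0∞) < MT T s₁ f x} :=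
              measure_union_le _ _
          _ ≤ (m:ℝ≥0∞) + m := add_le_add hva hvb
          _ = ((2*m : ℝ≥0) : ℝ≥0∞) := by push_cast; ring
      have hnn : lam * (2*m)^((1:ℝ)/p) = 2^((1:ℝ)/p) * (Cθ * Nn) := by
        rw [NNReal.mul_rpow, hmdef, ← NNReal.rpow_mul,
          show p * (1/p) = (1:ℝ) from mul_one_div_cancel hppos.ne', NNReal.rpow_one]
        rw [mul_comm lam, mul_assoc, div_mul_cancel₀ _ hlam.ne']
      calc (lam:ℝ≥0∞) * volume {x | (lam:ℝ≥0∞) < MT T s f x} ^ (1/p)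
          ≤ (lam:ℝ≥0∞) * ((2*m : ℝ≥0) : ℝ≥0∞) ^ ((1:ℝ)/p) :=
            mul_le_mul_right (ENNReal.rpow_le_rpow hvol (by positivity)) _
        _ = (((lam * (2*m)^((1:ℝ)/p) : ℝ≥0)) : ℝ≥0∞) := by
            conv_rhs => rw [ENNReal.coe_mul,
              ENNReal.coe_rpow_of_ne_zero (mul_ne_zero two_ne_zero hm)]
        _ = (((2^((1:ℝ)/p) * (Cθ * Nn) : ℝ≥0)) : ℝ≥0∞) := by rw [hnn]
        _ = (((2:ℝ≥0)^((1:ℝ)/p) : ℝ≥0) : ℝ≥0∞) * (C₀:ℝ≥0∞)^(1-θ) * (C₁:ℝ≥0∞)^θ * N := by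
            rw [ENNReal.coe_mul, ENNReal.coe_mul, hCθdef, ENNReal.coe_mul,
              ENNReal.coe_rpow_of_ne_zero hC₀, ENNReal.coe_rpow_of_ne_zero hC₁, hNcoe]
            ring
end
end

section
/- Let 1 ≤ r < ∞. There exist f ∈ L^∞_c, a measurable set K of positive measure, and for each cube Q a sparse family 𝒮(Q), such that sup_{Q ∋ x} ‖Λ_{𝒮(Q),r}(f 1_{(3Q)^c})‖_{L^∞(Q)} = ∞ for every x ∈ K. Concretely, one may take f = 1_{Q₀} for a fixed cube Q₀, 𝒮(Q) = {3^k Q : k ≥ 1}, and K = Q₀. -/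
open MeasureTheory Set
open scoped ENNReal NNReal

noncomputable section

/-- The `q`-average `⟨f⟩_{q,Q}` in `ℝ≥0∞`. -/
def avgE {n : ℕ} (q : ℝ) (Q : Cube n) (f : (Fin n → ℝ) → ℝ) : ℝ≥0∞ :=
  ((volume Q.set)⁻¹ * ∫⁻ y in Q.set, (‖f y‖₊ : ℝ≥0∞) ^ q) ^ (1 / q)

namespace Cube
variable {n : ℕ}

lemma set_eq (Q : Cube n) :
    Q.set = Set.univ.pi fun i => Icc (Q.c i - Q.r) (Q.c i + Q.r) := by
  ext x
  simp only [Cube.set, mem_setOf_eq, Set.mem_pi, Set.mem_univ, true_implies, Set.mem_Icc]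
  refine forall_congr' fun i => ?_
  rw [abs_le]
  constructor <;> rintro ⟨h1, h2⟩ <;> constructor <;> linarith

lemma meas (Q : Cube n) : MeasurableSet Q.set := by
  rw [set_eq]; exact MeasurableSet.univ_pi fun i => measurableSet_Icc

lemma vol (Q : Cube n) : volume Q.set = ENNReal.ofReal ((2 * Q.r) ^ n) := by
  rw [set_eq, volume_pi_pi]
  have h : ∀ i : Fin n, volume (Icc (Q.c i - Q.r) (Q.c i + Q.r))
      = ENNReal.ofReal (2 * Q.r) := by
    intro i; rw [Real.volume_Icc]; ring_nf
  simp only [h, Finset.prod_const, Finset.card_univ, Fintype.card_fin]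
  rw [← ENNReal.ofReal_pow (by have := Q.hr; linarith)]

lemma set_mono {Q Q' : Cube n} (hc : Q.c = Q'.c) (h : Q.r ≤ Q'.r) : Q.set ⊆ Q'.set := by
  intro x hx i
  rw [← hc]
  exact (hx i).trans h

end Cube

private lemma half_eq : (1/2 : ℝ≥0∞) = ENNReal.ofReal (1/2) := by
  rw [show (1/2 : ℝ) = (2:ℝ)⁻¹ by norm_num, ENNReal.ofReal_inv_of_pos two_pos,
    ENNReal.ofReal_ofNat, one_div]

/-- Failure of weak-type bounds for the grand maximal truncation of sparse operators:
for any `1 ≤ r < ∞` there exist `f ∈ L^∞_c`, a set `K` of positive measure, and for every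
cube `Q` a sparse family `𝒮(Q)` (uniformly `η`-sparse), such that
`sup_{Q ∋ x} ‖Λ_{𝒮(Q),r}(f 1_{(3Q)ᶜ})‖_{L^∞(Q)} = ∞` for every `x ∈ K`. -/
theorem stmt16 (n : ℕ) (hn : 0 < n) (r : ℝ) (hr : 1 ≤ r) :
    ∃ f : (Fin n → ℝ) → ℝ, (∃ M, ∀ x, |f x| ≤ M) ∧ HasCompactSupport f ∧
      ∃ K : Set (Fin n → ℝ), 0 < volume K ∧
        ∃ S : Cube n → ℕ → Cube n,
          (∃ η ∈ Set.Ioo (0 : ℝ) 1, ∀ Q : Cube n,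
            ∃ E : ℕ → Set (Fin n → ℝ),
              (∀ k, E k ⊆ (S Q k).set ∧
                η * (volume (S Q k).set).toReal < (volume (E k)).toReal) ∧
              Pairwise (Function.onFun Disjoint E)) ∧
          ∀ x ∈ K,
            (⨆ (Q : Cube n) (_ : x ∈ Q.set),
              essSup
                (fun y => ∑' k, avgE r (S Q k) ((Q.three.set)ᶜ.indicator f)
                    * (S Q k).set.indicator 1 y)
                (volume.restrict Q.set)) = ⊤ := by
  classical
  set Q0 : Cube n := ⟨0, 1, one_pos⟩ with hQ0
  set f : (Fin n → ℝ) → ℝ := Q0.set.indicator (fun _ => 1) with hf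
  -- dilates
  set P : Cube n → ℕ → Cube n := fun Q k => ⟨Q.c, 3 ^ k * Q.r, by have := Q.hr; positivity⟩ with hP
  set S : Cube n → ℕ → Cube n := fun Q k => P Q (k + 1) with hS
  have hPset : ∀ Q k, volume (P Q k).set = ENNReal.ofReal ((2 * (3 ^ k * Q.r)) ^ n) :=
    fun Q k => (P Q k).vol
  have hPmono : ∀ (Q : Cube n) {k l : ℕ}, k ≤ l → (P Q k).set ⊆ (P Q l).set := by
    intro Q k l hkl
    refine Cube.set_mono rfl ?_
    show (3:ℝ) ^ k * Q.r ≤ 3 ^ l * Q.r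
    have h1 : (3:ℝ) ^ k ≤ 3 ^ l := pow_le_pow_right₀ (by norm_num) hkl
    have := Q.hr
    nlinarith
  refine ⟨f, ⟨1, fun x => ?_⟩, ?_, ?_⟩
  · rw [hf]
    by_cases hx : x ∈ Q0.set <;>
      simp [Set.indicator_of_mem, Set.indicator_of_notMem, hx]
  · -- compact support
    refine HasCompactSupport.intro (K := Q0.set) ?_ ?_
    · rw [Cube.set_eq]
      exact isCompact_univ_pi fun i => isCompact_Icc
    · intro x hx
      rw [hf]; exact Set.indicator_of_notMem hx _
  refine ⟨(Cube.mk (0 : Fin n → ℝ) (1/2) (by norm_num)).set, ?_, S, ?_, ?_⟩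
  · rw [Cube.vol]
    simp only [ENNReal.ofReal_pos]
    positivity
  · -- sparsity
    refine ⟨1/2, ⟨by norm_num, by norm_num⟩, fun Q => ?_⟩
    refine ⟨fun k => (P Q (k+1)).set \ (P Q k).set, fun k => ⟨diff_subset, ?_⟩, ?_⟩
    · have hd : volume ((P Q (k+1)).set \ (P Q k).set)
          = volume (P Q (k+1)).set - volume (P Q k).set :=
        measure_diff (hPmono Q (Nat.le_succ k)) (P Q k).meas.nullMeasurableSet
          (by rw [hPset]; exact ENNReal.ofReal_ne_top)
      rw [hd, hPset, hPset, ← ENNReal.ofReal_sub _ (by have := Q.hr; positivity),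
        ENNReal.toReal_ofReal (by have := Q.hr; positivity), ENNReal.toReal_ofReal]
      · set B := (2 * (3 ^ k * Q.r)) ^ n with hB
        have hBpos : 0 < B := by have := Q.hr; positivity
        have hA : (2 * (3 ^ (k+1) * Q.r)) ^ n = 3 ^ n * B := by
          rw [hB, ← mul_pow]; ring_nf
        rw [hA]
        have h3 : (3:ℝ) ≤ 3 ^ n := by
          calc (3:ℝ) = 3 ^ 1 := (pow_one 3).symm
          _ ≤ 3 ^ n := pow_le_pow_right₀ (by norm_num) hn
        nlinarith
      · have hBA : (2 * (3 ^ k * Q.r)) ^ n ≤ (2 * (3 ^ (k+1) * Q.r)) ^ n := by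
          have := Q.hr
          gcongr
          · nlinarith [pow_pos (show (0:ℝ) < 3 by norm_num) k]
          · nlinarith [pow_nonneg (show (0:ℝ) ≤ 3 by norm_num) k]
        linarith
    · have key : ∀ k l, k < l →
          Disjoint ((P Q (k+1)).set \ (P Q k).set) ((P Q (l+1)).set \ (P Q l).set) := by
        intro k l hkl
        have h1 : (P Q (k+1)).set \ (P Q k).set ⊆ (P Q l).set :=
          diff_subset.trans (hPmono Q hkl)
        exact (disjoint_sdiff_self_right.mono_left h1)
      intro k l hkl
      rcases lt_or_gt_of_ne hkl with h | h
      · exact key k l h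
      · exact (key l k h).symm
  · -- main unboundedness
    intro x hx
    rw [iSup_eq_top]
    intro b hb
    obtain ⟨N, hN⟩ := ENNReal.exists_nat_gt (show 2 * b ≠ ⊤ from
      ENNReal.mul_ne_top (by norm_num) hb.ne)
    set q : ℝ := 1 / (2 * 3 ^ (N + 1)) with hq
    have hq0 : 0 < q := by positivity
    set Q : Cube n := ⟨x, q, hq0⟩ with hQ
    have hxQ : x ∈ Q.set := fun i => by simp [hQ, Cube.set, hq0.le]
    refine ⟨Q, ?_⟩
    rw [iSup_pos hxQ]
    set g : (Fin n → ℝ) → ℝ := (Q.three.set)ᶜ.indicator f with hg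
    have hxhalf : ∀ i, |x i| ≤ 1/2 := by
      intro i
      have := hx i
      simpa using this
    -- cubes S Q k, for k ≤ N, are inside Q0
    have hsub : ∀ k, k ≤ N → (S Q k).set ⊆ Q0.set := by
      intro k hk y hy i
      have h1 : |y i - x i| ≤ 3 ^ (k+1) * q := hy i
      have h2 : (3:ℝ) ^ (k+1) * q ≤ 3 ^ (N+1) * q := by
        have : (3:ℝ) ^ (k+1) ≤ 3 ^ (N+1) := pow_le_pow_right₀ (by norm_num) (by omega)
        nlinarith
      have h3 : (3:ℝ) ^ (N+1) * q = 1/2 := by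
        rw [hq]; field_simp
      have := hxhalf i
      have habs : |y i| ≤ 1 := by
        calc |y i| ≤ |y i - x i| + |x i| := by
              have := abs_sub_abs_le_abs_sub (y i) (x i); nlinarith [abs_sub_comm (y i) (x i),
                abs_add_le (y i - x i) (x i)]
        _ ≤ 1 := by rw [h3] at h2; linarith
      simpa [hQ0, Cube.set] using habs
    -- three Q ⊆ S Q k
    have h3sub : ∀ k, 1 ≤ k → Q.three.set ⊆ (S Q k).set := by
      intro k hk
      refine Cube.set_mono rfl ?_
      show 3 * q ≤ 3 ^ (k+1) * q
      have : (3:ℝ) = 3 ^ 1 := (pow_one 3).symm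
      have h31 : (3:ℝ) ^ 1 ≤ 3 ^ (k+1) := pow_le_pow_right₀ (by norm_num) (by omega)
      nlinarith
    -- lower bound on averages
    have havg : ∀ k, 1 ≤ k → k ≤ N → (1/2 : ℝ≥0∞) ≤ avgE r (S Q k) g := by
      intro k hk1 hkN
      set A : ℝ := (2 * (3 ^ (k+1) * q)) ^ n with hA
      set B : ℝ := (2 * (3 * q)) ^ n with hB
      have hApos : 0 < A := by positivity
      have hBpos : 0 < B := by positivity
      have hvolS : volume (S Q k).set = ENNReal.ofReal A := hPset Q (k+1)
      have hvol3 : volume Q.three.set = ENNReal.ofReal B := by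
        have := Q.three.vol
        simpa [Cube.three, hB] using this
      have hBA3 : 3 * B ≤ A := by
        have hA' : A = (3 ^ k) ^ n * B := by
          rw [hA, hB, ← mul_pow]; ring_nf
        have h3k : (3:ℝ) ≤ (3 ^ k) ^ n := by
          calc (3:ℝ) = 3 ^ 1 := (pow_one 3).symm
          _ ≤ 3 ^ (k * n) := pow_le_pow_right₀ (by norm_num) (by nlinarith)
          _ = (3 ^ k) ^ n := by rw [pow_mul]
        nlinarith
      -- volume of difference
      set D : Set (Fin n → ℝ) := (S Q k).set \ Q.three.set with hD
      have hDmeas : MeasurableSet D := (S Q k).meas.diff Q.three.meas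
      have hDvol : volume D = ENNReal.ofReal (A - B) := by
        rw [hD, measure_diff (h3sub k hk1) Q.three.meas.nullMeasurableSet
          (by rw [hvol3]; exact ENNReal.ofReal_ne_top), hvolS, hvol3,
          ← ENNReal.ofReal_sub _ hBpos.le]
      -- g = 1 on D
      have hgD : ∀ y ∈ D, g y = 1 := by
        intro y hy
        rw [hg, Set.indicator_of_mem (by exact hy.2)]
        rw [hf, Set.indicator_of_mem (hsub k hkN hy.1)]
      -- integral lower bound
      have hI : volume D ≤ ∫⁻ y in (S Q k).set, (‖g y‖₊ : ℝ≥0∞) ^ r := by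
        calc volume D = ∫⁻ _ in D, 1 := (setLIntegral_one D).symm
        _ ≤ ∫⁻ y in D, (‖g y‖₊ : ℝ≥0∞) ^ r := by
            refine lintegral_mono_ae ?_
            filter_upwards [self_mem_ae_restrict hDmeas] with y hy
            rw [hgD y hy]
            simp
        _ ≤ ∫⁻ y in (S Q k).set, (‖g y‖₊ : ℝ≥0∞) ^ r := lintegral_mono_set diff_subset
      -- combine
      have hfrac : (1/2 : ℝ≥0∞) ≤ (volume (S Q k).set)⁻¹ * volume D := by
        rw [mul_comm, ← div_eq_mul_inv]
        rw [ENNReal.le_div_iff_mul_le (Or.inl (by rw [hvolS]; simp [hApos]))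
          (Or.inl (by rw [hvolS]; exact ENNReal.ofReal_ne_top))]
        rw [hvolS, hDvol, half_eq, ← ENNReal.ofReal_mul (by norm_num)]
        exact ENNReal.ofReal_le_ofReal (by nlinarith)
      have hbase : (1/2 : ℝ≥0∞) ≤ (volume (S Q k).set)⁻¹ *
          ∫⁻ y in (S Q k).set, (‖g y‖₊ : ℝ≥0∞) ^ r := by
        refine hfrac.trans ?_
        exact mul_le_mul_right hI _
      calc (1/2 : ℝ≥0∞) = (1/2 : ℝ≥0∞) ^ (1:ℝ) := (ENNReal.rpow_one _).symm
      _ ≤ (1/2 : ℝ≥0∞) ^ (1/r) := by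
          refine ENNReal.rpow_le_rpow_of_exponent_ge (by norm_num) ?_
          rw [div_le_one (by linarith)]; linarith
      _ ≤ ((volume (S Q k).set)⁻¹ *
          ∫⁻ y in (S Q k).set, (‖g y‖₊ : ℝ≥0∞) ^ r) ^ (1/r) :=
          ENNReal.rpow_le_rpow hbase (by positivity)
      -- this is avgE
    -- sum lower bound
    have hsum : ∀ y ∈ Q.set, (N : ℝ≥0∞) * (1/2) ≤
        ∑' k, avgE r (S Q k) g * (S Q k).set.indicator 1 y := by
      intro y hy
      have hyS : ∀ k, y ∈ (S Q k).set := by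
        intro k
        refine Cube.set_mono (Q := Q) (Q' := S Q k) rfl ?_ hy
        show q ≤ 3 ^ (k+1) * q
        have h1 : (1:ℝ) ≤ 3 ^ (k+1) := one_le_pow₀ (by norm_num)
        nlinarith
      calc (N : ℝ≥0∞) * (1/2) = ∑ _k ∈ Finset.Icc 1 N, (1/2 : ℝ≥0∞) := by
            rw [Finset.sum_const, Nat.card_Icc]
            simp [nsmul_eq_mul]
      _ ≤ ∑ k ∈ Finset.Icc 1 N, avgE r (S Q k) g * (S Q k).set.indicator 1 y := by
            refine Finset.sum_le_sum fun k hk => ?_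
            rw [Set.indicator_of_mem (hyS k), Pi.one_apply, mul_one]
            rw [Finset.mem_Icc] at hk
            exact havg k hk.1 hk.2
      _ ≤ ∑' k, avgE r (S Q k) g * (S Q k).set.indicator 1 y :=
            ENNReal.sum_le_tsum _
    -- essSup lower bound
    have hmu : volume.restrict Q.set ≠ 0 := by
      rw [Ne, Measure.restrict_eq_zero, Q.vol]
      simp only [ENNReal.ofReal_eq_zero, not_le]
      positivity
    have hess : (N : ℝ≥0∞) * (1/2) ≤
        essSup (fun y => ∑' k, avgE r (S Q k) g * (S Q k).set.indicator 1 y)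
          (volume.restrict Q.set) := by
      rw [← essSup_const ((N : ℝ≥0∞) * (1/2)) hmu]
      refine essSup_mono_ae ?_
      filter_upwards [self_mem_ae_restrict Q.meas] with y hy
      exact hsum y hy
    refine lt_of_lt_of_le ?_ hess
    -- b < N/2
    have : b * 2 < (N : ℝ≥0∞) := by rwa [mul_comm] at hN
    rw [mul_one_div]
    exact (ENNReal.lt_div_iff_mul_lt (Or.inl (by norm_num)) (Or.inl (by norm_num))).2 this
end
end
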